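/- arXiv:2410.19078 — 2 statements merged into one kernel-verified Lean document; each statement's English description precedes it below -/
import Mathlib

section
/- Every totally even subset A of the edges of T_n is symmetric about the middle: {(x₁,y₁),(x₂,y₂)} ∈ A if and only if {(n+3−y₁−x₁, y₁),(n+3−y₂−x₂, y₂)} ∈ A. -/
/-! Triangular grid `Tₙ` -/

abbrev Pt : Type := ℕ × ℕ
abbrev TEdge : Type := Sym2 Pt

/-- `(x,y)` is a vertex of the triangular grid `Tₙ`. -/
def IsVertex (n : ℕ) (p : Pt) : Prop :=
  1 ≤ p.2 ∧ p.2 ≤ n + 1 ∧ 1 ≤ p.1 ∧ p.1 + p.2 ≤ n + 2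

/-- `e` is an edge of the triangular grid `Tₙ`. -/
def IsEdge (n : ℕ) (e : TEdge) : Prop :=
  ∃ x y : ℕ, IsVertex n (x, y) ∧
    ((e = s((x, y), (x + 1, y)) ∧ IsVertex n (x + 1, y)) ∨
     (e = s((x, y), (x, y + 1)) ∧ IsVertex n (x, y + 1)) ∨
     (e = s((x + 1, y), (x, y + 1)) ∧ IsVertex n (x + 1, y) ∧ IsVertex n (x, y + 1)))

/-- The three edges of the upward unit triangle with bottom-left corner `(x,y)`. -/
def upFace (x y : ℕ) : Set TEdge :=
  {s((x, y), (x + 1, y)), s((x, y), (x, y + 1)), s((x + 1, y), (x, y + 1))}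

/-- The three edges of the downward unit triangle. -/
def downFace (x y : ℕ) : Set TEdge :=
  {s((x + 1, y), (x, y + 1)), s((x + 1, y), (x + 1, y + 1)), s((x, y + 1), (x + 1, y + 1))}

/-- The upward triangle at `(x,y)` is a face of `Tₙ`. -/
def IsUpFace (n x y : ℕ) : Prop :=
  IsVertex n (x, y) ∧ IsVertex n (x + 1, y) ∧ IsVertex n (x, y + 1)

/-- The downward triangle at `(x,y)` is a face of `Tₙ`. -/
def IsDownFace (n x y : ℕ) : Prop :=
  IsVertex n (x + 1, y) ∧ IsVertex n (x, y + 1) ∧ IsVertex n (x + 1, y + 1)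

/-- A totally even subset of the edges of `Tₙ`: every vertex is incident to an even
number of its edges, and every unit triangular face contains an even number of its edges. -/
def TotallyEven (n : ℕ) (A : Set TEdge) : Prop :=
  (∀ e ∈ A, IsEdge n e) ∧
  (∀ p : Pt, IsVertex n p → Even (Set.ncard {e ∈ A | p ∈ e})) ∧
  (∀ x y : ℕ, IsUpFace n x y → Even (Set.ncard (A ∩ upFace x y))) ∧
  (∀ x y : ℕ, IsDownFace n x y → Even (Set.ncard (A ∩ downFace x y)))

/-- `C` is the edge set of a cycle in `Tₙ`. -/
def IsCycle (n : ℕ) (C : Set TEdge) : Prop :=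
  ∃ (m : ℕ) (f : ZMod m → Pt), 3 ≤ m ∧ Function.Injective f ∧
    (∀ i : ZMod m, IsEdge n s(f i, f (i + 1))) ∧
    C = {e : TEdge | ∃ i : ZMod m, e = s(f i, f (i + 1))}

/-- Two edge sets of `Tₙ` have the same Slitherlink signature: each unit triangular face
contains equally many edges of both. -/
def SameSignature (n : ℕ) (C₁ C₂ : Set TEdge) : Prop :=
  (∀ x y : ℕ, IsUpFace n x y →
    Set.ncard (C₁ ∩ upFace x y) = Set.ncard (C₂ ∩ upFace x y)) ∧
  (∀ x y : ℕ, IsDownFace n x y →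
    Set.ncard (C₁ ∩ downFace x y) = Set.ncard (C₂ ∩ downFace x y))

/-- `A` is the totally even subset `A(i)` of `Tₙ`: it is totally even and its intersection
with the bottom side is exactly the single edge `{(i,1),(i+1,1)}`. -/
def IsBasisSubset (n i : ℕ) (A : Set TEdge) : Prop :=
  TotallyEven n A ∧
  ∀ i' : ℕ, 1 ≤ i' → i' ≤ n → (s(((i' : ℕ), 1), (i' + 1, 1)) ∈ A ↔ i' = i)

def eH (x y : ℕ) : TEdge := s((x, y), (x + 1, y))
def eV (x y : ℕ) : TEdge := s((x, y), (x, y + 1))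
def eD (x y : ℕ) : TEdge := s((x + 1, y), (x, y + 1))

noncomputable def chi (A : Set TEdge) (e : TEdge) : ZMod 2 :=
  Set.indicator A (fun _ => 1) e

lemma chi_mem {A : Set TEdge} {e : TEdge} (h : e ∈ A) : chi A e = 1 :=
  Set.indicator_of_mem h _

lemma chi_not_mem {A : Set TEdge} {e : TEdge} (h : e ∉ A) : chi A e = 0 :=
  Set.indicator_of_notMem h _

lemma mem_of_chi_eq {A : Set TEdge} {e e' : TEdge} (h : chi A e = chi A e') (he : e ∈ A) :
    e' ∈ A := by
  by_cases h' : e' ∈ A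
  · exact h'
  · rw [chi_mem he, chi_not_mem h'] at h
    exact absurd h one_ne_zero

lemma even_ncard_inter_iff (A : Set TEdge) (F : Finset TEdge) :
    Even ((A ∩ ↑F).ncard) ↔ ∑ e ∈ F, chi A e = 0 := by
  classical
  have h1 : A ∩ ↑F = ↑(F.filter (· ∈ A)) := by ext e; simp [and_comm]
  rw [h1, Set.ncard_coe_finset, even_iff_two_dvd,
    ← ZMod.natCast_eq_zero_iff, Finset.card_filter, Nat.cast_sum]
  have : ∀ e : TEdge, ((if e ∈ A then (1:ℕ) else 0 : ℕ) : ZMod 2) = chi A e := by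
    intro e
    by_cases h : e ∈ A
    · simp [h, chi_mem h]
    · simp [h, chi_not_mem h]
  rw [Finset.sum_congr rfl (fun e _ => this e)]

lemma isVertex_iff {n x y : ℕ} :
    IsVertex n (x, y) ↔ 1 ≤ y ∧ y ≤ n + 1 ∧ 1 ≤ x ∧ x + y ≤ n + 2 := Iff.rfl

lemma boundsH {n x y : ℕ} (h : IsEdge n (eH x y)) : 1 ≤ x ∧ 1 ≤ y ∧ x + y ≤ n + 1 := by
  obtain ⟨a, b, hv, hc⟩ := h
  rcases hc with ⟨he, hv2⟩ | ⟨he, hv2⟩ | ⟨he, hv2, hv3⟩ <;>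
    simp only [isVertex_iff, eH, Sym2.eq_iff, Prod.mk.injEq] at * <;> omega

lemma boundsV {n x y : ℕ} (h : IsEdge n (eV x y)) : 1 ≤ x ∧ 1 ≤ y ∧ x + y ≤ n + 1 := by
  obtain ⟨a, b, hv, hc⟩ := h
  rcases hc with ⟨he, hv2⟩ | ⟨he, hv2⟩ | ⟨he, hv2, hv3⟩ <;>
    simp only [isVertex_iff, eV, Sym2.eq_iff, Prod.mk.injEq] at * <;> omega

lemma boundsD {n x y : ℕ} (h : IsEdge n (eD x y)) : 1 ≤ x ∧ 1 ≤ y ∧ x + y ≤ n + 1 := by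
  obtain ⟨a, b, hv, hc⟩ := h
  rcases hc with ⟨he, hv2⟩ | ⟨he, hv2⟩ | ⟨he, hv2, hv3⟩ <;>
    simp only [isVertex_iff, eD, Sym2.eq_iff, Prod.mk.injEq] at * <;> omega

lemma parity3 {A : Set TEdge} {e1 e2 e3 : TEdge} (h12 : e1 ≠ e2) (h13 : e1 ≠ e3)
    (h23 : e2 ≠ e3) (h : Even ((A ∩ {e1, e2, e3}).ncard)) :
    chi A e1 + (chi A e2 + chi A e3) = 0 := by
  classical
  have hF : ({e1, e2, e3} : Set TEdge) = ↑({e1, e2, e3} : Finset TEdge) := by simp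
  rw [hF, even_ncard_inter_iff] at h
  rwa [Finset.sum_insert (by simp [h12, h13]), Finset.sum_insert (by simp [h23]),
    Finset.sum_singleton] at h

lemma parity6 {A : Set TEdge} {e1 e2 e3 e4 e5 e6 : TEdge}
    (h12 : e1 ≠ e2) (h13 : e1 ≠ e3) (h14 : e1 ≠ e4) (h15 : e1 ≠ e5) (h16 : e1 ≠ e6)
    (h23 : e2 ≠ e3) (h24 : e2 ≠ e4) (h25 : e2 ≠ e5) (h26 : e2 ≠ e6)
    (h34 : e3 ≠ e4) (h35 : e3 ≠ e5) (h36 : e3 ≠ e6)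
    (h45 : e4 ≠ e5) (h46 : e4 ≠ e6) (h56 : e5 ≠ e6)
    (h : Even ((A ∩ {e1, e2, e3, e4, e5, e6}).ncard)) :
    chi A e1 + (chi A e2 + (chi A e3 + (chi A e4 + (chi A e5 + chi A e6)))) = 0 := by
  classical
  have hF : ({e1, e2, e3, e4, e5, e6} : Set TEdge)
      = ↑({e1, e2, e3, e4, e5, e6} : Finset TEdge) := by simp
  rw [hF, even_ncard_inter_iff] at h
  rwa [Finset.sum_insert (by simp [h12, h13, h14, h15, h16]),
    Finset.sum_insert (by simp [h23, h24, h25, h26]),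
    Finset.sum_insert (by simp [h34, h35, h36]),
    Finset.sum_insert (by simp [h45, h46]),
    Finset.sum_insert (by simp [h56]), Finset.sum_singleton] at h

lemma supH {n : ℕ} {A : Set TEdge} (hA : TotallyEven n A) :
    ∀ x y, x = 0 ∨ y = 0 ∨ n + 2 ≤ x + y → chi A (eH x y) = 0 := by
  intro x y hxy
  refine chi_not_mem (fun hm => ?_)
  have := boundsH (hA.1 _ hm)
  omega

lemma supV {n : ℕ} {A : Set TEdge} (hA : TotallyEven n A) :
    ∀ x y, x = 0 ∨ y = 0 ∨ n + 2 ≤ x + y → chi A (eV x y) = 0 := by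
  intro x y hxy
  refine chi_not_mem (fun hm => ?_)
  have := boundsV (hA.1 _ hm)
  omega

lemma supD {n : ℕ} {A : Set TEdge} (hA : TotallyEven n A) :
    ∀ x y, x = 0 ∨ y = 0 ∨ n + 2 ≤ x + y → chi A (eD x y) = 0 := by
  intro x y hxy
  refine chi_not_mem (fun hm => ?_)
  have := boundsD (hA.1 _ hm)
  omega

lemma upRel {n : ℕ} {A : Set TEdge} (hA : TotallyEven n A) :
    ∀ x y, chi A (eD x y) = chi A (eH x y) + chi A (eV x y) := by
  intro x y
  by_cases hb : 1 ≤ x ∧ 1 ≤ y ∧ x + y ≤ n + 1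
  · have hface : IsUpFace n x y := by
      refine ⟨?_, ?_, ?_⟩ <;> rw [isVertex_iff] <;> omega
    have hev := hA.2.2.1 x y hface
    have hup : (upFace x y : Set TEdge) = {eH x y, eV x y, eD x y} := rfl
    rw [hup] at hev
    have h3 := parity3 (by simp only [ne_eq, eH, eV, Sym2.eq_iff, Prod.mk.injEq]; omega)
      (by simp only [ne_eq, eH, eD, Sym2.eq_iff, Prod.mk.injEq]; omega)
      (by simp only [ne_eq, eV, eD, Sym2.eq_iff, Prod.mk.injEq]; omega) hev
    exact (by decide : ∀ a b c : ZMod 2, a + (b + c) = 0 → c = a + b) _ _ _ h3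
  · rw [supD hA x y (by omega), supH hA x y (by omega), supV hA x y (by omega)]
    simp

lemma downRel {n : ℕ} {A : Set TEdge} (hA : TotallyEven n A) :
    ∀ x y, 1 ≤ x → 1 ≤ y → x + y ≤ n →
      chi A (eH x (y + 1)) = chi A (eD x y) + chi A (eV (x + 1) y) := by
  intro x y hx hy hxy
  have hface : IsDownFace n x y := by
    refine ⟨?_, ?_, ?_⟩ <;> rw [isVertex_iff] <;> omega
  have hev := hA.2.2.2 x y hface
  have hdn : (downFace x y : Set TEdge) = {eD x y, eV (x + 1) y, eH x (y + 1)} := rfl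
  rw [hdn] at hev
  have h3 := parity3 (by simp only [ne_eq, eD, eV, Sym2.eq_iff, Prod.mk.injEq]; omega)
    (by simp only [ne_eq, eD, eH, Sym2.eq_iff, Prod.mk.injEq]; omega)
    (by simp only [ne_eq, eV, eH, Sym2.eq_iff, Prod.mk.injEq]; omega) hev
  exact (by decide : ∀ a b c : ZMod 2, a + (b + c) = 0 → c = a + b) _ _ _ h3

set_option maxHeartbeats 1000000 in
lemma vrel {n : ℕ} {A : Set TEdge} (hA : TotallyEven n A) :
    ∀ x z, chi A (eV (x + 1) (z + 1)) + chi A (eV x (z + 1)) + chi A (eH (x + 1) (z + 1))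
      + chi A (eH (x + 1) z) = 0 := by
  intro x z
  by_cases hb : x + z ≤ n
  · have hp : IsVertex n (x + 1, z + 1) := by rw [isVertex_iff]; omega
    have hev := hA.2.1 (x + 1, z + 1) hp
    have hset : {e ∈ A | ((x + 1 : ℕ), (z + 1 : ℕ)) ∈ e} = A ∩
        {eH x (z + 1), eH (x + 1) (z + 1), eV (x + 1) z, eV (x + 1) (z + 1),
          eD x (z + 1), eD (x + 1) z} := by
      ext e
      simp only [Set.mem_setOf_eq, Set.mem_inter_iff, Set.mem_insert_iff,
        Set.mem_singleton_iff]
      constructor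
      · rintro ⟨heA, hpe⟩
        refine ⟨heA, ?_⟩
        obtain ⟨a, b, hv, hc⟩ := hA.1 e heA
        rcases hc with ⟨rfl, hv2⟩ | ⟨rfl, hv2⟩ | ⟨rfl, hv2, hv3⟩ <;>
          rw [Sym2.mem_iff] at hpe <;> simp only [Prod.mk.injEq] at hpe
        · rcases hpe with ⟨h1, h2⟩ | ⟨h1, h2⟩
          · obtain rfl : a = x + 1 := by omega
            obtain rfl : b = z + 1 := by omega
            exact Or.inr (Or.inl rfl)
          · obtain rfl : a = x := by omega
            obtain rfl : b = z + 1 := by omega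
            exact Or.inl rfl
        · rcases hpe with ⟨h1, h2⟩ | ⟨h1, h2⟩
          · obtain rfl : a = x + 1 := by omega
            obtain rfl : b = z + 1 := by omega
            exact Or.inr (Or.inr (Or.inr (Or.inl rfl)))
          · obtain rfl : a = x + 1 := by omega
            obtain rfl : b = z := by omega
            exact Or.inr (Or.inr (Or.inl rfl))
        · rcases hpe with ⟨h1, h2⟩ | ⟨h1, h2⟩
          · obtain rfl : a = x := by omega
            obtain rfl : b = z + 1 := by omega
            exact Or.inr (Or.inr (Or.inr (Or.inr (Or.inl rfl))))
          · obtain rfl : a = x + 1 := by omega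
            obtain rfl : b = z := by omega
            exact Or.inr (Or.inr (Or.inr (Or.inr (Or.inr rfl))))
      · rintro ⟨heA, hmem⟩
        refine ⟨heA, ?_⟩
        rcases hmem with rfl | rfl | rfl | rfl | rfl | rfl <;>
          simp [eH, eV, eD, Sym2.mem_iff]
    rw [hset] at hev
    have h6 := parity6
      (by simp only [ne_eq, eH, Sym2.eq_iff, Prod.mk.injEq]; omega)
      (by simp only [ne_eq, eH, eV, Sym2.eq_iff, Prod.mk.injEq]; omega)
      (by simp only [ne_eq, eH, eV, Sym2.eq_iff, Prod.mk.injEq]; omega)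
      (by simp only [ne_eq, eH, eD, Sym2.eq_iff, Prod.mk.injEq]; omega)
      (by simp only [ne_eq, eH, eD, Sym2.eq_iff, Prod.mk.injEq]; omega)
      (by simp only [ne_eq, eH, eV, Sym2.eq_iff, Prod.mk.injEq]; omega)
      (by simp only [ne_eq, eH, eV, Sym2.eq_iff, Prod.mk.injEq]; omega)
      (by simp only [ne_eq, eH, eD, Sym2.eq_iff, Prod.mk.injEq]; omega)
      (by simp only [ne_eq, eH, eD, Sym2.eq_iff, Prod.mk.injEq]; omega)
      (by simp only [ne_eq, eV, Sym2.eq_iff, Prod.mk.injEq]; omega)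
      (by simp only [ne_eq, eV, eD, Sym2.eq_iff, Prod.mk.injEq]; omega)
      (by simp only [ne_eq, eV, eD, Sym2.eq_iff, Prod.mk.injEq]; omega)
      (by simp only [ne_eq, eV, eD, Sym2.eq_iff, Prod.mk.injEq]; omega)
      (by simp only [ne_eq, eV, eD, Sym2.eq_iff, Prod.mk.injEq]; omega)
      (by simp only [ne_eq, eD, Sym2.eq_iff, Prod.mk.injEq]; omega)
      hev
    have hu1 := upRel hA x (z + 1)
    have hu2 := upRel hA (x + 1) z
    exact (by decide : ∀ a b c d e f g h : ZMod 2,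
      a + (b + (c + (d + (f + g)))) = 0 → f = a + e → g = h + c →
      d + e + b + h = 0) _ _ _ _ _ _ _ _ h6 hu1 hu2
  · rw [supV hA (x + 1) (z + 1) (by omega), supV hA x (z + 1) (by omega),
      supH hA (x + 1) (z + 1) (by omega), supH hA (x + 1) z (by omega)]
    simp



def AAx (H : ℕ → ℕ → ZMod 2) (k : ℕ) : ZMod 2 := ∑ j ∈ Finset.range (k + 1), H j 1
def BBx (H : ℕ → ℕ → ZMod 2) (m : ℕ) : ZMod 2 := ∑ k ∈ Finset.range m, AAx H k
def SSx (n : ℕ) (H : ℕ → ℕ → ZMod 2) (y : ℕ) : ZMod 2 := ∑ x ∈ Finset.range (n + 4), H x y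

section Core

variable {n : ℕ} {H V D : ℕ → ℕ → ZMod 2}

lemma rec3 (hU : ∀ x y, D x y = H x y + V x y)
    (hV : ∀ x z, V (x + 1) (z + 1) + V x (z + 1) + H (x + 1) (z + 1) + H (x + 1) z = 0)
    (hD : ∀ x y, 1 ≤ x → 1 ≤ y → x + y ≤ n → H x (y + 1) = D x y + V (x + 1) y) :
    ∀ x z, 1 ≤ x → x + z + 1 ≤ n →
      H x (z + 2) = H x (z + 1) + H (x + 1) (z + 1) + H (x + 1) z := by
  intro x z hx hn
  have h3 := hD x (z + 1) hx (by omega) (by omega)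
  have h2 := hU x (z + 1)
  have hv := hV x z
  exact (by decide : ∀ a b c d e f g : ZMod 2, a = b + c → b = d + e →
    c + e + f + g = 0 → a = d + f + g) _ _ _ _ _ _ _ h3 h2 hv

lemma pairLem (hHs : ∀ x y, x = 0 ∨ y = 0 ∨ n + 2 ≤ x + y → H x y = 0)
    (hU : ∀ x y, D x y = H x y + V x y)
    (hV : ∀ x z, V (x + 1) (z + 1) + V x (z + 1) + H (x + 1) (z + 1) + H (x + 1) z = 0)
    (hD : ∀ x y, 1 ≤ x → 1 ≤ y → x + y ≤ n → H x (y + 1) = D x y + V (x + 1) y) :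
    ∀ z x, 1 ≤ x → x + z ≤ n → H x z + H x (z + 1) = H (x + z) 1 := by
  intro z
  induction z with
  | zero =>
    intro x hx hn
    rw [hHs x 0 (by omega), zero_add]
    rfl
  | succ z ih =>
    intro x hx hn
    have hrec := rec3 hU hV hD x z hx (by omega)
    have hih := ih (x + 1) (by omega) (by omega)
    have hx1 : x + 1 + z = x + (z + 1) := by omega
    rw [hx1] at hih
    exact (by decide : ∀ a b c d e : ZMod 2, b = a + c + d → d + c = e → a + b = e)
      _ _ _ _ _ hrec hih

lemma hformLem (hHs : ∀ x y, x = 0 ∨ y = 0 ∨ n + 2 ≤ x + y → H x y = 0)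
    (hU : ∀ x y, D x y = H x y + V x y)
    (hV : ∀ x z, V (x + 1) (z + 1) + V x (z + 1) + H (x + 1) (z + 1) + H (x + 1) z = 0)
    (hD : ∀ x y, 1 ≤ x → 1 ≤ y → x + y ≤ n → H x (y + 1) = D x y + V (x + 1) y) :
    ∀ z x, x + z + 1 ≤ n → H (x + 1) (z + 1) = AAx H (x + z + 1) + AAx H x := by
  intro z
  induction z with
  | zero =>
    intro x hn
    have h : AAx H (x + 1) = AAx H x + H (x + 1) 1 := Finset.sum_range_succ _ _
    exact (by decide : ∀ a b c : ZMod 2, b = c + a → a = b + c) _ _ _ h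
  | succ z ih =>
    intro x hn
    have hp := pairLem hHs hU hV hD (z + 1) (x + 1) (by omega) (by omega)
    have hih := ih x (by omega)
    have ha : AAx H (x + z + 2) = AAx H (x + z + 1) + H (x + z + 2) 1 :=
      Finset.sum_range_succ _ _
    have hidx : x + 1 + (z + 1) = x + z + 2 := by omega
    rw [hidx] at hp
    have hgoal : H (x + 1) (z + 2) = AAx H (x + z + 2) + AAx H x :=
      (by decide : ∀ a b c d e f : ZMod 2, a + b = c → a = d + e → f = d + c →
        b = f + e) _ _ _ _ _ _ hp hih ha
    exact hgoal

lemma S0Lem (hHs : ∀ x y, x = 0 ∨ y = 0 ∨ n + 2 ≤ x + y → H x y = 0) :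
    SSx n H 0 = 0 :=
  Finset.sum_eq_zero (fun x _ => hHs x 0 (by omega))

lemma SstepLem (hHs : ∀ x y, x = 0 ∨ y = 0 ∨ n + 2 ≤ x + y → H x y = 0)
    (hVs : ∀ x y, x = 0 ∨ y = 0 ∨ n + 2 ≤ x + y → V x y = 0)
    (hV : ∀ x z, V (x + 1) (z + 1) + V x (z + 1) + H (x + 1) (z + 1) + H (x + 1) z = 0) :
    ∀ z, SSx n H (z + 1) = SSx n H z := by
  intro z
  have h0 : ∑ x ∈ Finset.range (n + 3),
      (V (x + 1) (z + 1) + V x (z + 1) + H (x + 1) (z + 1) + H (x + 1) z) = 0 :=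
    Finset.sum_eq_zero (fun x _ => hV x z)
  rw [Finset.sum_add_distrib, Finset.sum_add_distrib, Finset.sum_add_distrib] at h0
  have e1 : ∑ x ∈ Finset.range (n + 3), V (x + 1) (z + 1)
      = ∑ x ∈ Finset.range (n + 4), V x (z + 1) := by
    have h := Finset.sum_range_succ' (fun x => V x (z + 1)) (n + 3)
    rw [hVs 0 (z + 1) (by omega), add_zero] at h
    exact h.symm
  have e2 : ∑ x ∈ Finset.range (n + 3), V x (z + 1)
      = ∑ x ∈ Finset.range (n + 4), V x (z + 1) := by
    have h := Finset.sum_range_succ (fun x => V x (z + 1)) (n + 3)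
    rw [hVs (n + 3) (z + 1) (by omega), add_zero] at h
    exact h.symm
  have e3 : ∑ x ∈ Finset.range (n + 3), H (x + 1) (z + 1) = SSx n H (z + 1) := by
    have h := Finset.sum_range_succ' (fun x => H x (z + 1)) (n + 3)
    rw [hHs 0 (z + 1) (by omega), add_zero] at h
    exact h.symm
  have e4 : ∑ x ∈ Finset.range (n + 3), H (x + 1) z = SSx n H z := by
    have h := Finset.sum_range_succ' (fun x => H x z) (n + 3)
    rw [hHs 0 z (by omega), add_zero] at h
    exact h.symm
  rw [e1, e2, e3, e4] at h0
  exact (by decide : ∀ a b c : ZMod 2, a + a + b + c = 0 → b = c) _ _ _ h0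

lemma SzeroLem (hHs : ∀ x y, x = 0 ∨ y = 0 ∨ n + 2 ≤ x + y → H x y = 0)
    (hVs : ∀ x y, x = 0 ∨ y = 0 ∨ n + 2 ≤ x + y → V x y = 0)
    (hV : ∀ x z, V (x + 1) (z + 1) + V x (z + 1) + H (x + 1) (z + 1) + H (x + 1) z = 0) :
    ∀ y, SSx n H y = 0 := by
  intro y
  induction y with
  | zero => exact S0Lem hHs
  | succ z ih => rw [SstepLem hHs hVs hV z]; exact ih

lemma shiftAA : ∀ m c, ∑ x ∈ Finset.range m, AAx H (x + c) = BBx H (m + c) + BBx H c := by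
  intro m c
  induction m with
  | zero =>
    rw [Nat.zero_add]
    simp only [Finset.range_zero, Finset.sum_empty]
    exact ((by decide : ∀ a : ZMod 2, a + a = 0) _).symm
  | succ m ih =>
    rw [Finset.sum_range_succ, ih]
    have h : BBx H (m + c + 1) = BBx H (m + c) + AAx H (m + c) := Finset.sum_range_succ _ _
    have hidx : m + 1 + c = m + c + 1 := by omega
    rw [hidx, h]
    ring

lemma conLem (hHs : ∀ x y, x = 0 ∨ y = 0 ∨ n + 2 ≤ x + y → H x y = 0)
    (hVs : ∀ x y, x = 0 ∨ y = 0 ∨ n + 2 ≤ x + y → V x y = 0)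
    (hU : ∀ x y, D x y = H x y + V x y)
    (hV : ∀ x z, V (x + 1) (z + 1) + V x (z + 1) + H (x + 1) (z + 1) + H (x + 1) z = 0)
    (hD : ∀ x y, 1 ≤ x → 1 ≤ y → x + y ≤ n → H x (y + 1) = D x y + V (x + 1) y) :
    ∀ z, z + 1 ≤ n → BBx H (z + 1) + BBx H (n - z) = BBx H (n + 1) := by
  intro z hz
  have hS := SzeroLem hHs hVs hV (z + 1)
  have h1 : SSx n H (z + 1) = ∑ x ∈ Finset.range (n + 3), H (x + 1) (z + 1) := by
    have h := Finset.sum_range_succ' (fun x => H x (z + 1)) (n + 3)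
    rw [hHs 0 (z + 1) (by omega), add_zero] at h
    exact h
  have htr : ∑ x ∈ Finset.range (n + 3), H (x + 1) (z + 1)
      = ∑ x ∈ Finset.range (n - z), H (x + 1) (z + 1) := by
    refine (Finset.sum_subset (Finset.range_subset_range.mpr (by omega)) ?_).symm
    intro x hx hnx
    simp only [Finset.mem_range] at hx hnx
    exact hHs _ _ (by omega)
  have hcong : ∑ x ∈ Finset.range (n - z), H (x + 1) (z + 1)
      = ∑ x ∈ Finset.range (n - z), (AAx H (x + z + 1) + AAx H x) := by
    refine Finset.sum_congr rfl (fun x hx => ?_)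
    simp only [Finset.mem_range] at hx
    exact hformLem hHs hU hV hD z x (by omega)
  have hsplit : ∑ x ∈ Finset.range (n - z), (AAx H (x + z + 1) + AAx H x)
      = (BBx H (n + 1) + BBx H (z + 1)) + BBx H (n - z) := by
    have hsh := shiftAA (H := H) (n - z) (z + 1)
    simp only [← Nat.add_assoc] at hsh
    have hidx : n - z + z + 1 = n + 1 := by omega
    rw [hidx] at hsh
    rw [Finset.sum_add_distrib, hsh]
    rfl
  rw [h1, htr, hcong, hsplit] at hS
  exact (by decide : ∀ a b c : ZMod 2, a + b + c = 0 → b + c = a) _ _ _ hS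

lemma aa0Lem (hHs : ∀ x y, x = 0 ∨ y = 0 ∨ n + 2 ≤ x + y → H x y = 0) :
    AAx H 0 = 0 := by
  show ∑ j ∈ Finset.range 1, H j 1 = 0
  rw [Finset.sum_range_one]
  exact hHs 0 1 (by omega)

lemma aanLem (hHs : ∀ x y, x = 0 ∨ y = 0 ∨ n + 2 ≤ x + y → H x y = 0)
    (hVs : ∀ x y, x = 0 ∨ y = 0 ∨ n + 2 ≤ x + y → V x y = 0)
    (hV : ∀ x z, V (x + 1) (z + 1) + V x (z + 1) + H (x + 1) (z + 1) + H (x + 1) z = 0) :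
    AAx H n = 0 := by
  have hS := SzeroLem hHs hVs hV 1
  have e : SSx n H 1 = ((AAx H n + H (n + 1) 1) + H (n + 2) 1) + H (n + 3) 1 := by
    show ∑ x ∈ Finset.range (n + 4), H x 1 = _
    rw [Finset.sum_range_succ, Finset.sum_range_succ, Finset.sum_range_succ]
    rfl
  rw [hHs (n + 1) 1 (by omega), hHs (n + 2) 1 (by omega), hHs (n + 3) 1 (by omega),
    add_zero, add_zero, add_zero, hS] at e
  exact e.symm

lemma asymLem (hHs : ∀ x y, x = 0 ∨ y = 0 ∨ n + 2 ≤ x + y → H x y = 0)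
    (hVs : ∀ x y, x = 0 ∨ y = 0 ∨ n + 2 ≤ x + y → V x y = 0)
    (hU : ∀ x y, D x y = H x y + V x y)
    (hV : ∀ x z, V (x + 1) (z + 1) + V x (z + 1) + H (x + 1) (z + 1) + H (x + 1) z = 0)
    (hD : ∀ x y, 1 ≤ x → 1 ≤ y → x + y ≤ n → H x (y + 1) = D x y + V (x + 1) y) :
    ∀ y, y ≤ n → AAx H y = AAx H (n - y) := by
  intro y hy
  rcases Nat.eq_zero_or_pos y with rfl | hy1
  · rw [Nat.sub_zero, aa0Lem hHs, aanLem hHs hVs hV]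
  rcases eq_or_lt_of_le hy with rfl | hy2
  · rw [Nat.sub_self, aa0Lem hHs, aanLem hHs hVs hV]
  have c1 := conLem hHs hVs hU hV hD y (by omega)
  have c2 := conLem hHs hVs hU hV hD (y - 1) (by omega)
  have e1 : y - 1 + 1 = y := by omega
  have e2 : n - (y - 1) = n - y + 1 := by omega
  rw [e1, e2] at c2
  have a1 : AAx H y = BBx H (y + 1) + BBx H y := by
    have h : BBx H (y + 1) = BBx H y + AAx H y := Finset.sum_range_succ _ _
    exact (by decide : ∀ a b c : ZMod 2, a = b + c → c = a + b) _ _ _ h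
  have a2 : AAx H (n - y) = BBx H (n - y + 1) + BBx H (n - y) := by
    have h : BBx H (n - y + 1) = BBx H (n - y) + AAx H (n - y) := Finset.sum_range_succ _ _
    exact (by decide : ∀ a b c : ZMod 2, a = b + c → c = a + b) _ _ _ h
  exact (by decide : ∀ b1 b2 b3 b4 bn q1 q2 : ZMod 2, b2 + b3 = bn → b1 + b4 = bn →
    q1 = b2 + b1 → q2 = b4 + b3 → q1 = q2) _ _ _ _ _ _ _ c1 c2 a1 a2

lemma bottomSymLem (hHs : ∀ x y, x = 0 ∨ y = 0 ∨ n + 2 ≤ x + y → H x y = 0)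
    (hVs : ∀ x y, x = 0 ∨ y = 0 ∨ n + 2 ≤ x + y → V x y = 0)
    (hU : ∀ x y, D x y = H x y + V x y)
    (hV : ∀ x z, V (x + 1) (z + 1) + V x (z + 1) + H (x + 1) (z + 1) + H (x + 1) z = 0)
    (hD : ∀ x y, 1 ≤ x → 1 ≤ y → x + y ≤ n → H x (y + 1) = D x y + V (x + 1) y) :
    ∀ x, H x 1 = H (n + 1 - x) 1 := by
  intro x
  by_cases hx0 : x = 0
  · subst hx0
    rw [hHs 0 1 (by omega), hHs (n + 1 - 0) 1 (by omega)]
  by_cases hxn : n + 1 ≤ x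
  · rw [hHs x 1 (by omega), hHs (n + 1 - x) 1 (by omega)]
  obtain ⟨w, rfl⟩ : ∃ w, x = w + 1 := ⟨x - 1, by omega⟩
  obtain ⟨v, hv⟩ : ∃ v, n - w = v + 1 := ⟨n - w - 1, by omega⟩
  have hgoal : n + 1 - (w + 1) = v + 1 := by omega
  rw [hgoal]
  have haw : AAx H (w + 1) = AAx H w + H (w + 1) 1 := Finset.sum_range_succ _ _
  have hav : AAx H (v + 1) = AAx H v + H (v + 1) 1 := Finset.sum_range_succ _ _
  have has1 : AAx H (w + 1) = AAx H v := by
    have h := asymLem hHs hVs hU hV hD (w + 1) (by omega)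
    rwa [show n - (w + 1) = v from by omega] at h
  have has2 : AAx H w = AAx H (v + 1) := by
    have h := asymLem hHs hVs hU hV hD w (by omega)
    rwa [hv] at h
  exact (by decide : ∀ aw1 aw av1 av g1 g2 : ZMod 2, aw1 = aw + g1 → av1 = av + g2 →
    aw1 = av → aw = av1 → g1 = g2) _ _ _ _ _ _ haw hav has1 has2

lemma coreZero (hHs : ∀ x y, x = 0 ∨ y = 0 ∨ n + 2 ≤ x + y → H x y = 0)
    (hVs : ∀ x y, x = 0 ∨ y = 0 ∨ n + 2 ≤ x + y → V x y = 0)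
    (hU : ∀ x y, D x y = H x y + V x y)
    (hV : ∀ x z, V (x + 1) (z + 1) + V x (z + 1) + H (x + 1) (z + 1) + H (x + 1) z = 0)
    (hD : ∀ x y, 1 ≤ x → 1 ≤ y → x + y ≤ n → H x (y + 1) = D x y + V (x + 1) y)
    (hbot : ∀ x, H x 1 = 0) :
    ∀ x y, H x y = 0 ∧ V x y = 0 ∧ D x y = 0 := by
  have hrow : ∀ y x, H x y = 0 ∧ H x (y + 1) = 0 := by
    intro y
    induction y with
    | zero => exact fun x => ⟨hHs x 0 (by omega), hbot x⟩
    | succ z ih =>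
      have hVrow : ∀ x, V x (z + 1) = 0 := by
        intro x
        induction x with
        | zero => exact hVs 0 (z + 1) (by omega)
        | succ w ihw =>
          have hvr := hV w z
          exact (by decide : ∀ a b c d : ZMod 2, a + b + c + d = 0 → b = 0 → c = 0 →
            d = 0 → a = 0) _ _ _ _ hvr ihw (ih (w + 1)).2 (ih (w + 1)).1
      intro x
      refine ⟨(ih x).2, ?_⟩
      by_cases hb : 1 ≤ x ∧ x + z + 1 ≤ n
      · have h3 := hD x (z + 1) hb.1 (by omega) (by omega)
        rw [h3, hU x (z + 1), (ih x).2, hVrow x, hVrow (x + 1)]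
        simp
      · exact hHs x (z + 1 + 1) (by omega)
  have hH : ∀ x y, H x y = 0 := fun x y => (hrow y x).1
  have hVall : ∀ x y, V x y = 0 := by
    intro x y
    cases y with
    | zero => exact hVs x 0 (by omega)
    | succ z =>
      induction x with
      | zero => exact hVs 0 (z + 1) (by omega)
      | succ w ihw =>
        have hvr := hV w z
        exact (by decide : ∀ a b c d : ZMod 2, a + b + c + d = 0 → b = 0 → c = 0 →
          d = 0 → a = 0) _ _ _ _ hvr ihw (hH _ _) (hH _ _)
  exact fun x y => ⟨hH x y, hVall x y, by rw [hU, hH, hVall]; simp⟩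

end Core


lemma symAll {n : ℕ} {A : Set TEdge} (hA : TotallyEven n A) :
    ∀ x y, chi A (eH x y) = chi A (eH (n + 2 - y - x) y) ∧
      chi A (eV x y) = chi A (eD (n + 2 - y - x) y) ∧
      chi A (eD x y) = chi A (eV (n + 2 - y - x) y) := by
  have d1 : ∀ x y, x = 0 ∨ y = 0 ∨ n + 2 ≤ x + y →
      chi A (eH x y) + chi A (eH (n + 2 - y - x) y) = 0 := by
    intro x y hc
    rw [supH hA x y hc, supH hA (n + 2 - y - x) y (by omega), add_zero]
  have d2 : ∀ x y, x = 0 ∨ y = 0 ∨ n + 2 ≤ x + y →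
      chi A (eV x y) + chi A (eD (n + 2 - y - x) y) = 0 := by
    intro x y hc
    rw [supV hA x y hc, supD hA (n + 2 - y - x) y (by omega), add_zero]
  have d3 : ∀ x y, chi A (eD x y) + chi A (eV (n + 2 - y - x) y)
      = (chi A (eH x y) + chi A (eH (n + 2 - y - x) y))
        + (chi A (eV x y) + chi A (eD (n + 2 - y - x) y)) := by
    intro x y
    have hu1 := upRel hA x y
    have hu2 := upRel hA (n + 2 - y - x) y
    exact (by decide : ∀ dA hA' vA dR hR vR : ZMod 2, dA = hA' + vA → dR = hR + vR →
      dA + vR = (hA' + hR) + (vA + dR)) _ _ _ _ _ _ hu1 hu2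
  have d4 : ∀ x z,
      (chi A (eV (x + 1) (z + 1)) + chi A (eD (n + 2 - (z + 1) - (x + 1)) (z + 1)))
      + (chi A (eV x (z + 1)) + chi A (eD (n + 2 - (z + 1) - x) (z + 1)))
      + (chi A (eH (x + 1) (z + 1)) + chi A (eH (n + 2 - (z + 1) - (x + 1)) (z + 1)))
      + (chi A (eH (x + 1) z) + chi A (eH (n + 2 - z - (x + 1)) z)) = 0 := by
    intro x z
    by_cases hc : x + z ≤ n
    · have e1 : n + 2 - (z + 1) - (x + 1) = n - z - x := by omega
      have e2 : n + 2 - (z + 1) - x = n - z - x + 1 := by omega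
      have e3 : n + 2 - z - (x + 1) = n - z - x + 1 := by omega
      rw [e1, e2, e3, upRel hA (n - z - x) (z + 1), upRel hA (n - z - x + 1) (z + 1)]
      have h1 := vrel hA x z
      have h2 := vrel hA (n - z - x) z
      exact (by decide : ∀ vX1 vX hX1 hXz vK1 vK hK1 hK1z hK : ZMod 2,
        vX1 + vX + hX1 + hXz = 0 → vK1 + vK + hK1 + hK1z = 0 →
        (vX1 + (hK + vK)) + (vX + (hK1 + vK1)) + (hX1 + hK) + (hXz + hK1z) = 0)
        _ _ _ _ _ _ _ _ _ h1 h2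
    · rw [supV hA (x + 1) (z + 1) (by omega),
        supD hA (n + 2 - (z + 1) - (x + 1)) (z + 1) (by omega),
        supV hA x (z + 1) (by omega),
        supD hA (n + 2 - (z + 1) - x) (z + 1) (by omega),
        supH hA (x + 1) (z + 1) (by omega),
        supH hA (n + 2 - (z + 1) - (x + 1)) (z + 1) (by omega),
        supH hA (x + 1) z (by omega),
        supH hA (n + 2 - z - (x + 1)) z (by omega)]
      simp
  have d5 : ∀ x y, 1 ≤ x → 1 ≤ y → x + y ≤ n →
      chi A (eH x (y + 1)) + chi A (eH (n + 2 - (y + 1) - x) (y + 1))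
      = (chi A (eD x y) + chi A (eV (n + 2 - y - x) y))
        + (chi A (eV (x + 1) y) + chi A (eD (n + 2 - y - (x + 1)) y)) := by
    intro x y hx hy hxy
    have e1 : n + 2 - (y + 1) - x = n + 1 - y - x := by omega
    have e2 : n + 2 - y - x = n + 1 - y - x + 1 := by omega
    have e3 : n + 2 - y - (x + 1) = n + 1 - y - x := by omega
    rw [e1, e2, e3]
    have h1 := downRel hA x y hx hy hxy
    have h2 := downRel hA (n + 1 - y - x) y (by omega) hy (by omega)
    exact (by decide : ∀ a b c d e f : ZMod 2, a = c + e → b = d + f →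
      a + b = (c + f) + (e + d)) _ _ _ _ _ _ h1 h2
  have d6 : ∀ x, chi A (eH x 1) + chi A (eH (n + 2 - 1 - x) 1) = 0 := by
    intro x
    have hb := bottomSymLem (supH hA) (supV hA) (upRel hA) (vrel hA) (downRel hA) x
    rw [show n + 2 - 1 - x = n + 1 - x from by omega]
    exact (by decide : ∀ a b : ZMod 2, a = b → a + b = 0) _ _ hb
  have hz := coreZero d1 d2 d3 d4 d5 d6
  intro x y
  obtain ⟨z1, z2, z3⟩ := hz x y
  refine ⟨?_, ?_, ?_⟩
  · exact (by decide : ∀ a b : ZMod 2, a + b = 0 → a = b) _ _ z1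
  · exact (by decide : ∀ a b : ZMod 2, a + b = 0 → a = b) _ _ z2
  · exact (by decide : ∀ a b : ZMod 2, a + b = 0 → a = b) _ _ z3

lemma mem_vertices {n : ℕ} {A : Set TEdge} (hA : TotallyEven n A) {p q : Pt}
    (h : s(p, q) ∈ A) : IsVertex n p ∧ IsVertex n q := by
  obtain ⟨a, b, hv, hc⟩ := hA.1 _ h
  rcases hc with ⟨he, hv2⟩ | ⟨he, hv2⟩ | ⟨he, hv2, hv3⟩ <;> rw [Sym2.eq_iff] at he <;>
    rcases he with ⟨h1, h2⟩ | ⟨h1, h2⟩ <;> subst h1 <;> subst h2 <;>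
    exact ⟨by assumption, by assumption⟩

lemma mem_reflect {n : ℕ} {A : Set TEdge} (hA : TotallyEven n A)
    (x₁ y₁ x₂ y₂ : ℕ) (h : s((x₁, y₁), (x₂, y₂)) ∈ A) :
    s((n + 3 - y₁ - x₁, y₁), (n + 3 - y₂ - x₂, y₂)) ∈ A := by
  obtain ⟨a, b, hv, hc⟩ := hA.1 _ h
  rw [isVertex_iff] at hv
  rcases hc with ⟨he, hv2⟩ | ⟨he, hv2⟩ | ⟨he, hv2, hv3⟩
  · -- horizontal edge
    rw [isVertex_iff] at hv2
    rw [Sym2.eq_iff] at he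
    simp only [Prod.mk.injEq] at he
    have hsy := (symAll hA a b).1
    rw [show n + 2 - b - a = n + 1 - b - a + 1 from by omega] at hsy
    have hm : eH (n + 1 - b - a + 1) b ∈ A := by
      refine mem_of_chi_eq hsy ?_
      rcases he with ⟨⟨h1, h2⟩, h3, h4⟩ | ⟨⟨h1, h2⟩, h3, h4⟩ <;>
        subst h1 <;> subst h2 <;> subst h3 <;> subst h4
      · exact h
      · rw [Sym2.eq_swap] at h
        exact h
    rcases he with ⟨⟨h1, h2⟩, h3, h4⟩ | ⟨⟨h1, h2⟩, h3, h4⟩ <;> rw [h1, h2, h3, h4]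
    · rw [show n + 3 - b - a = n + 1 - b - a + 2 from by omega,
        show n + 3 - b - (a + 1) = n + 1 - b - a + 1 from by omega]
      rw [Sym2.eq_swap]
      exact hm
    · rw [show n + 3 - b - (a + 1) = n + 1 - b - a + 1 from by omega,
        show n + 3 - b - a = n + 1 - b - a + 2 from by omega]
      exact hm
  · -- vertical edge
    rw [isVertex_iff] at hv2
    rw [Sym2.eq_iff] at he
    simp only [Prod.mk.injEq] at he
    have hsy := (symAll hA a b).2.1
    rw [show n + 2 - b - a = n + 1 - b - a + 1 from by omega] at hsy
    have hm : eD (n + 1 - b - a + 1) b ∈ A := by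
      refine mem_of_chi_eq hsy ?_
      rcases he with ⟨⟨h1, h2⟩, h3, h4⟩ | ⟨⟨h1, h2⟩, h3, h4⟩ <;>
        subst h1 <;> subst h2 <;> subst h3 <;> subst h4
      · exact h
      · rw [Sym2.eq_swap] at h
        exact h
    rcases he with ⟨⟨h1, h2⟩, h3, h4⟩ | ⟨⟨h1, h2⟩, h3, h4⟩ <;> rw [h1, h2, h3, h4]
    · rw [show n + 3 - b - a = n + 1 - b - a + 2 from by omega,
        show n + 3 - (b + 1) - a = n + 1 - b - a + 1 from by omega]
      exact hm
    · rw [show n + 3 - (b + 1) - a = n + 1 - b - a + 1 from by omega,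
        show n + 3 - b - a = n + 1 - b - a + 2 from by omega]
      rw [Sym2.eq_swap]
      exact hm
  · -- diagonal edge
    rw [isVertex_iff] at hv2 hv3
    rw [Sym2.eq_iff] at he
    simp only [Prod.mk.injEq] at he
    have hsy := (symAll hA a b).2.2
    rw [show n + 2 - b - a = n + 1 - b - a + 1 from by omega] at hsy
    have hm : eV (n + 1 - b - a + 1) b ∈ A := by
      refine mem_of_chi_eq hsy ?_
      rcases he with ⟨⟨h1, h2⟩, h3, h4⟩ | ⟨⟨h1, h2⟩, h3, h4⟩ <;>
        subst h1 <;> subst h2 <;> subst h3 <;> subst h4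
      · exact h
      · rw [Sym2.eq_swap] at h
        exact h
    rcases he with ⟨⟨h1, h2⟩, h3, h4⟩ | ⟨⟨h1, h2⟩, h3, h4⟩ <;> rw [h1, h2, h3, h4]
    · rw [show n + 3 - b - (a + 1) = n + 1 - b - a + 1 from by omega,
        show n + 3 - (b + 1) - a = n + 1 - b - a + 1 from by omega]
      exact hm
    · rw [show n + 3 - (b + 1) - a = n + 1 - b - a + 1 from by omega,
        show n + 3 - b - (a + 1) = n + 1 - b - a + 1 from by omega]
      rw [Sym2.eq_swap]
      exact hm

/-- Every totally even subset of `Tₙ` is symmetric about the middle, the reflection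
`(x, y) ↦ (n + 3 - y - x, y)`. -/
theorem totallyEven_symmetric_middle (n : ℕ) (A : Set TEdge) (hA : TotallyEven n A)
    (x₁ y₁ x₂ y₂ : ℕ) :
    s((x₁, y₁), (x₂, y₂)) ∈ A ↔
      s((n + 3 - y₁ - x₁, y₁), (n + 3 - y₂ - x₂, y₂)) ∈ A := by
  constructor
  · exact mem_reflect hA x₁ y₁ x₂ y₂
  · intro h
    have h2 := mem_reflect hA _ _ _ _ h
    obtain ⟨hv1, hv2⟩ := mem_vertices hA h
    rw [isVertex_iff] at hv1 hv2
    rw [show n + 3 - y₁ - (n + 3 - y₁ - x₁) = x₁ from by omega,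
      show n + 3 - y₂ - (n + 3 - y₂ - x₂) = x₂ from by omega] at h2
    exact h2
end

section
/- For each i with 1 ≤ i ≤ ⌊n/2⌋, there exists a totally even subset A of the edges of T_n such that {(i,1),(i+1,1)} ∈ A and for all i' ≠ i with 1 ≤ i' ≤ ⌊n/2⌋, the edge {(i',1),(i'+1,1)} is not in A. -/
namespace TotEvenAux

open scoped Classical

/-- The step function: `true` on `[i, n-i]`. -/
def cc (n i k : ℕ) : Bool := decide (i ≤ k ∧ k ≤ n - i)

/-- The totally even subset `A(i)`. -/
def myA (n i : ℕ) : Set TEdge :=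
  {e | ∃ x y : ℕ,
    ((1 ≤ x ∧ 1 ≤ y ∧ x + y ≤ n + 1) ∧ e = s((x, y), (x + 1, y)) ∧
        cc n i (x + y - 1) ≠ cc n i (x - 1)) ∨
    ((1 ≤ x ∧ 1 ≤ y ∧ x + y ≤ n + 1) ∧ e = s((x, y), (x, y + 1)) ∧
        cc n i (x + y - 1) ≠ cc n i (y - 1)) ∨
    ((1 ≤ x ∧ 1 ≤ y ∧ x + y ≤ n + 1) ∧ e = s((x + 1, y), (x, y + 1)) ∧
        cc n i (x - 1) ≠ cc n i (y - 1))}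

lemma cc_zero (n i : ℕ) (hi1 : 1 ≤ i) : cc n i 0 = false := by
  simp only [cc, decide_eq_false_iff_not]; omega

lemma cc_n (n i : ℕ) (hi1 : 1 ≤ i) (hi2 : i ≤ n / 2) : cc n i n = false := by
  simp only [cc, decide_eq_false_iff_not]; omega

lemma cc_symm (n i k : ℕ) (hi2 : i ≤ n / 2) (hk : k ≤ n) : cc n i k = cc n i (n - k) := by
  simp only [cc, decide_eq_decide]; omega

lemma memH (n i x y : ℕ) :
    s((x, y), (x + 1, y)) ∈ myA n i ↔
      (1 ≤ x ∧ 1 ≤ y ∧ x + y ≤ n + 1) ∧ cc n i (x + y - 1) ≠ cc n i (x - 1) := by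
  constructor
  · rintro ⟨a, b, ⟨hb, he, hc⟩ | ⟨hb, he, hc⟩ | ⟨hb, he, hc⟩⟩ <;>
      simp only [Sym2.eq_iff, Prod.mk.injEq] at he
    · obtain ⟨rfl, rfl⟩ : x = a ∧ y = b := by omega
      exact ⟨hb, hc⟩
    · exact absurd he (by omega)
    · exact absurd he (by omega)
  · rintro ⟨hb, hc⟩
    exact ⟨x, y, Or.inl ⟨hb, rfl, hc⟩⟩

lemma memV (n i x y : ℕ) :
    s((x, y), (x, y + 1)) ∈ myA n i ↔
      (1 ≤ x ∧ 1 ≤ y ∧ x + y ≤ n + 1) ∧ cc n i (x + y - 1) ≠ cc n i (y - 1) := by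
  constructor
  · rintro ⟨a, b, ⟨hb, he, hc⟩ | ⟨hb, he, hc⟩ | ⟨hb, he, hc⟩⟩ <;>
      simp only [Sym2.eq_iff, Prod.mk.injEq] at he
    · exact absurd he (by omega)
    · obtain ⟨rfl, rfl⟩ : x = a ∧ y = b := by omega
      exact ⟨hb, hc⟩
    · exact absurd he (by omega)
  · rintro ⟨hb, hc⟩
    exact ⟨x, y, Or.inr (Or.inl ⟨hb, rfl, hc⟩)⟩

lemma memD (n i x y : ℕ) :
    s((x + 1, y), (x, y + 1)) ∈ myA n i ↔
      (1 ≤ x ∧ 1 ≤ y ∧ x + y ≤ n + 1) ∧ cc n i (x - 1) ≠ cc n i (y - 1) := by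
  constructor
  · rintro ⟨a, b, ⟨hb, he, hc⟩ | ⟨hb, he, hc⟩ | ⟨hb, he, hc⟩⟩ <;>
      simp only [Sym2.eq_iff, Prod.mk.injEq] at he
    · exact absurd he (by omega)
    · exact absurd he (by omega)
    · obtain ⟨rfl, rfl⟩ : x = a ∧ y = b := by omega
      exact ⟨hb, hc⟩
  · rintro ⟨hb, hc⟩
    exact ⟨x, y, Or.inr (Or.inr ⟨hb, rfl, hc⟩)⟩

lemma ncard_step (A : Set TEdge) (a : TEdge) (s : Set TEdge) (hs : s.Finite) (ha : a ∉ s) :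
    (A ∩ insert a s).ncard = (if a ∈ A then 1 else 0) + (A ∩ s).ncard := by
  by_cases h : a ∈ A
  · have he : A ∩ insert a s = insert a (A ∩ s) := by
      ext e
      simp only [Set.mem_inter_iff, Set.mem_insert_iff]
      constructor
      · rintro ⟨h1, rfl | h2⟩
        · exact Or.inl rfl
        · exact Or.inr ⟨h1, h2⟩
      · rintro (rfl | ⟨h1, h2⟩)
        · exact ⟨h, Or.inl rfl⟩
        · exact ⟨h1, Or.inr h2⟩
    rw [he, if_pos h, Set.ncard_insert_of_notMem (fun hc => ha hc.2) (hs.inter_of_right A)]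
    omega
  · have he : A ∩ insert a s = A ∩ s := by
      ext e
      simp only [Set.mem_inter_iff, Set.mem_insert_iff]
      constructor
      · rintro ⟨h1, rfl | h2⟩
        · exact absurd h1 h
        · exact ⟨h1, h2⟩
      · rintro ⟨h1, h2⟩
        exact ⟨h1, Or.inr h2⟩
    rw [he, if_neg h, Nat.zero_add]

lemma card1 (A : Set TEdge) (e : TEdge) :
    (A ∩ {e}).ncard = (if e ∈ A then 1 else 0) := by
  rw [show ({e} : Set TEdge) = insert e ∅ from by simp,
    ncard_step A e ∅ Set.finite_empty (Set.notMem_empty e), Set.inter_empty, Set.ncard_empty,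
    Nat.add_zero]

lemma card3 (A : Set TEdge) (e1 e2 e3 : TEdge)
    (d12 : e1 ≠ e2) (d13 : e1 ≠ e3) (d23 : e2 ≠ e3) :
    (A ∩ {e1, e2, e3}).ncard =
      (if e1 ∈ A then 1 else 0) + ((if e2 ∈ A then 1 else 0) + (if e3 ∈ A then 1 else 0)) := by
  have f3 : ({e3} : Set TEdge).Finite := Set.finite_singleton e3
  rw [ncard_step A e1 _ (f3.insert e2) (by simp [d12, d13]),
    ncard_step A e2 _ f3 (by simp [d23]), card1]

lemma card6 (A : Set TEdge) (e1 e2 e3 e4 e5 e6 : TEdge)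
    (d12 : e1 ≠ e2) (d13 : e1 ≠ e3) (d14 : e1 ≠ e4) (d15 : e1 ≠ e5) (d16 : e1 ≠ e6)
    (d23 : e2 ≠ e3) (d24 : e2 ≠ e4) (d25 : e2 ≠ e5) (d26 : e2 ≠ e6)
    (d34 : e3 ≠ e4) (d35 : e3 ≠ e5) (d36 : e3 ≠ e6)
    (d45 : e4 ≠ e5) (d46 : e4 ≠ e6) (d56 : e5 ≠ e6) :
    (A ∩ {e1, e2, e3, e4, e5, e6}).ncard =
      (if e1 ∈ A then 1 else 0) + ((if e2 ∈ A then 1 else 0) + ((if e3 ∈ A then 1 else 0) +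
        ((if e4 ∈ A then 1 else 0) + ((if e5 ∈ A then 1 else 0) + (if e6 ∈ A then 1 else 0))))) := by
  have f6 : ({e6} : Set TEdge).Finite := Set.finite_singleton e6
  have f5 := f6.insert e5
  have f4 := f5.insert e4
  have f3 := f4.insert e3
  rw [ncard_step A e1 _ (f3.insert e2) (by simp [d12, d13, d14, d15, d16]),
    ncard_step A e2 _ f3 (by simp [d23, d24, d25, d26]),
    ncard_step A e3 _ f4 (by simp [d34, d35, d36]),
    ncard_step A e4 _ f5 (by simp [d45, d46]),
    ncard_step A e5 _ f6 (by simp [d56]), card1]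

lemma myA_isEdge (n i : ℕ) (e : TEdge) (he : e ∈ myA n i) : IsEdge n e := by
  obtain ⟨x, y, ⟨hb, rfl, -⟩ | ⟨hb, rfl, -⟩ | ⟨hb, rfl, -⟩⟩ := he
  · exact ⟨x, y, (show 1 ≤ y ∧ y ≤ n + 1 ∧ 1 ≤ x ∧ x + y ≤ n + 2 from by omega),
      Or.inl ⟨rfl, show 1 ≤ y ∧ y ≤ n + 1 ∧ 1 ≤ x + 1 ∧ x + 1 + y ≤ n + 2 from by omega⟩⟩
  · exact ⟨x, y, (show 1 ≤ y ∧ y ≤ n + 1 ∧ 1 ≤ x ∧ x + y ≤ n + 2 from by omega),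
      Or.inr (Or.inl ⟨rfl, show 1 ≤ y + 1 ∧ y + 1 ≤ n + 1 ∧ 1 ≤ x ∧ x + (y + 1) ≤ n + 2 from by omega⟩)⟩
  · exact ⟨x, y, (show 1 ≤ y ∧ y ≤ n + 1 ∧ 1 ≤ x ∧ x + y ≤ n + 2 from by omega),
      Or.inr (Or.inr ⟨rfl,
        show 1 ≤ y ∧ y ≤ n + 1 ∧ 1 ≤ x + 1 ∧ x + 1 + y ≤ n + 2 from by omega,
        show 1 ≤ y + 1 ∧ y + 1 ≤ n + 1 ∧ 1 ≤ x ∧ x + (y + 1) ≤ n + 2 from by omega⟩)⟩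

lemma myA_up (n i x y : ℕ) (hf : IsUpFace n x y) :
    Even ((myA n i ∩ upFace x y).ncard) := by
  obtain ⟨hv1, hv2, hv3⟩ := hf
  have hb1 : 1 ≤ y ∧ y ≤ n + 1 ∧ 1 ≤ x ∧ x + y ≤ n + 2 := hv1
  have hb3 : 1 ≤ y + 1 ∧ y + 1 ≤ n + 1 ∧ 1 ≤ x ∧ x + (y + 1) ≤ n + 2 := hv3
  rw [show upFace x y =
      {s((x, y), (x + 1, y)), s((x, y), (x, y + 1)), s((x + 1, y), (x, y + 1))} from rfl,
    card3 _ _ _ _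
      (by simp only [ne_eq, Sym2.eq_iff, Prod.mk.injEq]; omega)
      (by simp only [ne_eq, Sym2.eq_iff, Prod.mk.injEq]; omega)
      (by simp only [ne_eq, Sym2.eq_iff, Prod.mk.injEq]; omega)]
  simp only [memH, memV, memD,
    and_iff_right (show 1 ≤ x ∧ 1 ≤ y ∧ x + y ≤ n + 1 from by omega)]
  rcases Bool.eq_false_or_eq_true (cc n i (x + y - 1)) with h1 | h1 <;>
    rcases Bool.eq_false_or_eq_true (cc n i (x - 1)) with h2 | h2 <;>
    rcases Bool.eq_false_or_eq_true (cc n i (y - 1)) with h3 | h3 <;>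
    simp [h1, h2, h3] <;> decide

lemma myA_down (n i x y : ℕ) (hf : IsDownFace n x y) :
    Even ((myA n i ∩ downFace x y).ncard) := by
  obtain ⟨hv1, hv2, hv3⟩ := hf
  have hb1 : 1 ≤ y ∧ y ≤ n + 1 ∧ 1 ≤ x + 1 ∧ x + 1 + y ≤ n + 2 := hv1
  have hb2 : 1 ≤ y + 1 ∧ y + 1 ≤ n + 1 ∧ 1 ≤ x ∧ x + (y + 1) ≤ n + 2 := hv2
  have hb3 : 1 ≤ y + 1 ∧ y + 1 ≤ n + 1 ∧ 1 ≤ x + 1 ∧ x + 1 + (y + 1) ≤ n + 2 := hv3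
  rw [show downFace x y =
      {s((x + 1, y), (x, y + 1)), s((x + 1, y), (x + 1, y + 1)), s((x, y + 1), (x + 1, y + 1))}
      from rfl,
    card3 _ _ _ _
      (by simp only [ne_eq, Sym2.eq_iff, Prod.mk.injEq]; omega)
      (by simp only [ne_eq, Sym2.eq_iff, Prod.mk.injEq]; omega)
      (by simp only [ne_eq, Sym2.eq_iff, Prod.mk.injEq]; omega)]
  simp only [memH, memV, memD]
  simp only [show x + 1 + y - 1 = x + y from by omega,
    show x + (y + 1) - 1 = x + y from by omega,
    show x + 1 - 1 = x from by omega]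
  simp only [and_iff_right (show 1 ≤ x ∧ 1 ≤ y ∧ x + y ≤ n + 1 from by omega),
    and_iff_right (show 1 ≤ x + 1 ∧ 1 ≤ y ∧ x + 1 + y ≤ n + 1 from by omega),
    and_iff_right (show 1 ≤ x ∧ 1 ≤ y + 1 ∧ x + (y + 1) ≤ n + 1 from by omega)]
  rcases Bool.eq_false_or_eq_true (cc n i (x + y)) with h1 | h1 <;>
    rcases Bool.eq_false_or_eq_true (cc n i (x - 1)) with h2 | h2 <;>
    rcases Bool.eq_false_or_eq_true (cc n i (y - 1)) with h3 | h3 <;>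
    simp [h1, h2, h3] <;> decide

lemma myA_vertex (n i : ℕ) (hi1 : 1 ≤ i) (hi2 : i ≤ n / 2) (p : Pt) (hp : IsVertex n p) :
    Even (Set.ncard {e ∈ myA n i | p ∈ e}) := by
  obtain ⟨a, b⟩ := p
  obtain ⟨hp1, hp2, hp3, hp4⟩ : 1 ≤ b ∧ b ≤ n + 1 ∧ 1 ≤ a ∧ a + b ≤ n + 2 := hp
  obtain ⟨α, rfl⟩ : ∃ α, a = α + 1 := ⟨a - 1, by omega⟩
  obtain ⟨β, rfl⟩ : ∃ β, b = β + 1 := ⟨b - 1, by omega⟩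
  have hset : {e ∈ myA n i | ((α + 1 : ℕ), (β + 1 : ℕ)) ∈ e} =
      myA n i ∩ {s((α, β + 1), (α + 1, β + 1)), s((α + 1, β + 1), (α + 1 + 1, β + 1)),
        s((α + 1, β), (α + 1, β + 1)), s((α + 1, β + 1), (α + 1, β + 1 + 1)),
        s((α + 1, β + 1), (α, β + 1 + 1)), s((α + 1 + 1, β), (α + 1, β + 1))} := by
    ext e
    simp only [Set.mem_sep_iff, Set.mem_inter_iff, Set.mem_insert_iff, Set.mem_singleton_iff]
    constructor
    · rintro ⟨heA, hpe⟩
      refine ⟨heA, ?_⟩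
      obtain ⟨x, y, ⟨hb, rfl, -⟩ | ⟨hb, rfl, -⟩ | ⟨hb, rfl, -⟩⟩ := heA
      · rw [Sym2.mem_iff] at hpe
        rcases hpe with hpe | hpe <;> rw [Prod.mk.injEq] at hpe
        · obtain ⟨rfl, rfl⟩ : x = α + 1 ∧ y = β + 1 := by omega
          exact Or.inr (Or.inl rfl)
        · obtain ⟨rfl, rfl⟩ : x = α ∧ y = β + 1 := by omega
          exact Or.inl rfl
      · rw [Sym2.mem_iff] at hpe
        rcases hpe with hpe | hpe <;> rw [Prod.mk.injEq] at hpe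
        · obtain ⟨rfl, rfl⟩ : x = α + 1 ∧ y = β + 1 := by omega
          exact Or.inr (Or.inr (Or.inr (Or.inl rfl)))
        · obtain ⟨rfl, rfl⟩ : x = α + 1 ∧ y = β := by omega
          exact Or.inr (Or.inr (Or.inl rfl))
      · rw [Sym2.mem_iff] at hpe
        rcases hpe with hpe | hpe <;> rw [Prod.mk.injEq] at hpe
        · obtain ⟨rfl, rfl⟩ : x = α ∧ y = β + 1 := by omega
          exact Or.inr (Or.inr (Or.inr (Or.inr (Or.inl rfl))))
        · obtain ⟨rfl, rfl⟩ : x = α + 1 ∧ y = β := by omega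
          exact Or.inr (Or.inr (Or.inr (Or.inr (Or.inr rfl))))
    · rintro ⟨heA, rfl | rfl | rfl | rfl | rfl | rfl⟩ <;>
        exact ⟨heA, by rw [Sym2.mem_iff]; simp⟩
  rw [hset, card6 _ _ _ _ _ _ _
    (by simp only [ne_eq, Sym2.eq_iff, Prod.mk.injEq]; omega)
    (by simp only [ne_eq, Sym2.eq_iff, Prod.mk.injEq]; omega)
    (by simp only [ne_eq, Sym2.eq_iff, Prod.mk.injEq]; omega)
    (by simp only [ne_eq, Sym2.eq_iff, Prod.mk.injEq]; omega)
    (by simp only [ne_eq, Sym2.eq_iff, Prod.mk.injEq]; omega)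
    (by simp only [ne_eq, Sym2.eq_iff, Prod.mk.injEq]; omega)
    (by simp only [ne_eq, Sym2.eq_iff, Prod.mk.injEq]; omega)
    (by simp only [ne_eq, Sym2.eq_iff, Prod.mk.injEq]; omega)
    (by simp only [ne_eq, Sym2.eq_iff, Prod.mk.injEq]; omega)
    (by simp only [ne_eq, Sym2.eq_iff, Prod.mk.injEq]; omega)
    (by simp only [ne_eq, Sym2.eq_iff, Prod.mk.injEq]; omega)
    (by simp only [ne_eq, Sym2.eq_iff, Prod.mk.injEq]; omega)
    (by simp only [ne_eq, Sym2.eq_iff, Prod.mk.injEq]; omega)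
    (by simp only [ne_eq, Sym2.eq_iff, Prod.mk.injEq]; omega)
    (by simp only [ne_eq, Sym2.eq_iff, Prod.mk.injEq]; omega)]
  simp only [memH, memV, memD]
  simp only [show α + (β + 1) - 1 = α + β from by omega,
    show α + 1 + (β + 1) - 1 = α + β + 1 from by omega,
    show α + 1 + β - 1 = α + β from by omega,
    show α + 1 - 1 = α from by omega,
    show β + 1 - 1 = β from by omega]
  have hab : α + β ≤ n := by omega
  rcases Nat.eq_zero_or_pos α with hα | hα <;> rcases Nat.eq_zero_or_pos β with hβ | hβ <;>
    rcases Nat.lt_or_ge (α + β) n with htop | htop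
  · -- α = 0, β = 0, interior
    simp only [and_iff_right (show 1 ≤ α + 1 ∧ 1 ≤ β + 1 ∧ α + 1 + (β + 1) ≤ n + 1 from by omega),
      show ∀ P : Prop, ((1 ≤ α ∧ 1 ≤ β + 1 ∧ α + (β + 1) ≤ n + 1) ∧ P) ↔ False from
        fun P => iff_false_intro (fun hc => absurd hc.1 (by omega)),
      show ∀ P : Prop, ((1 ≤ α + 1 ∧ 1 ≤ β ∧ α + 1 + β ≤ n + 1) ∧ P) ↔ False from
        fun P => iff_false_intro (fun hc => absurd hc.1 (by omega))]
    simp only [hα, hβ, Nat.zero_add, Nat.add_zero, cc_zero n i hi1]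
    rcases Bool.eq_false_or_eq_true (cc n i 1) with h1 | h1 <;> simp [h1] <;> decide
  · -- α = 0, β = 0, top: n = 0, contradicts 1 ≤ i ≤ n/2
    exact absurd hi1 (by omega)
  · -- α = 0, β ≥ 1, interior
    simp only [and_iff_right (show 1 ≤ α + 1 ∧ 1 ≤ β + 1 ∧ α + 1 + (β + 1) ≤ n + 1 from by omega),
      and_iff_right (show 1 ≤ α + 1 ∧ 1 ≤ β ∧ α + 1 + β ≤ n + 1 from by omega),
      show ∀ P : Prop, ((1 ≤ α ∧ 1 ≤ β + 1 ∧ α + (β + 1) ≤ n + 1) ∧ P) ↔ False from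
        fun P => iff_false_intro (fun hc => absurd hc.1 (by omega))]
    simp only [hα, Nat.zero_add, cc_zero n i hi1]
    rcases Bool.eq_false_or_eq_true (cc n i (β - 1)) with h1 | h1 <;>
      rcases Bool.eq_false_or_eq_true (cc n i β) with h2 | h2 <;>
      rcases Bool.eq_false_or_eq_true (cc n i (β + 1)) with h3 | h3 <;>
      simp [h1, h2, h3] <;> decide
  · -- α = 0, β ≥ 1, top: β = n
    simp only [and_iff_right (show 1 ≤ α + 1 ∧ 1 ≤ β ∧ α + 1 + β ≤ n + 1 from by omega),
      show ∀ P : Prop, ((1 ≤ α ∧ 1 ≤ β + 1 ∧ α + (β + 1) ≤ n + 1) ∧ P) ↔ False from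
        fun P => iff_false_intro (fun hc => absurd hc.1 (by omega)),
      show ∀ P : Prop, ((1 ≤ α + 1 ∧ 1 ≤ β + 1 ∧ α + 1 + (β + 1) ≤ n + 1) ∧ P) ↔ False from
        fun P => iff_false_intro (fun hc => absurd hc.1 (by omega))]
    simp only [hα, Nat.zero_add, show β = n from by omega, cc_n n i hi1 hi2, cc_zero n i hi1]
    rcases Bool.eq_false_or_eq_true (cc n i (n - 1)) with h1 | h1 <;> simp [h1] <;> decide
  · -- α ≥ 1, β = 0, interior
    simp only [and_iff_right (show 1 ≤ α ∧ 1 ≤ β + 1 ∧ α + (β + 1) ≤ n + 1 from by omega),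
      and_iff_right (show 1 ≤ α + 1 ∧ 1 ≤ β + 1 ∧ α + 1 + (β + 1) ≤ n + 1 from by omega),
      show ∀ P : Prop, ((1 ≤ α + 1 ∧ 1 ≤ β ∧ α + 1 + β ≤ n + 1) ∧ P) ↔ False from
        fun P => iff_false_intro (fun hc => absurd hc.1 (by omega))]
    simp only [hβ, Nat.add_zero, cc_zero n i hi1]
    rcases Bool.eq_false_or_eq_true (cc n i (α - 1)) with h1 | h1 <;>
      rcases Bool.eq_false_or_eq_true (cc n i α) with h2 | h2 <;>
      rcases Bool.eq_false_or_eq_true (cc n i (α + 1)) with h3 | h3 <;>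
      simp [h1, h2, h3] <;> decide
  · -- α ≥ 1, β = 0, top: α = n
    simp only [and_iff_right (show 1 ≤ α ∧ 1 ≤ β + 1 ∧ α + (β + 1) ≤ n + 1 from by omega),
      show ∀ P : Prop, ((1 ≤ α + 1 ∧ 1 ≤ β + 1 ∧ α + 1 + (β + 1) ≤ n + 1) ∧ P) ↔ False from
        fun P => iff_false_intro (fun hc => absurd hc.1 (by omega)),
      show ∀ P : Prop, ((1 ≤ α + 1 ∧ 1 ≤ β ∧ α + 1 + β ≤ n + 1) ∧ P) ↔ False from
        fun P => iff_false_intro (fun hc => absurd hc.1 (by omega))]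
    simp only [hβ, Nat.add_zero, show α = n from by omega, cc_n n i hi1 hi2, cc_zero n i hi1]
    rcases Bool.eq_false_or_eq_true (cc n i (n - 1)) with h1 | h1 <;> simp [h1] <;> decide
  · -- α ≥ 1, β ≥ 1, interior
    simp only [and_iff_right (show 1 ≤ α ∧ 1 ≤ β + 1 ∧ α + (β + 1) ≤ n + 1 from by omega),
      and_iff_right (show 1 ≤ α + 1 ∧ 1 ≤ β + 1 ∧ α + 1 + (β + 1) ≤ n + 1 from by omega),
      and_iff_right (show 1 ≤ α + 1 ∧ 1 ≤ β ∧ α + 1 + β ≤ n + 1 from by omega)]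
    rcases Bool.eq_false_or_eq_true (cc n i (α - 1)) with h1 | h1 <;>
      rcases Bool.eq_false_or_eq_true (cc n i α) with h2 | h2 <;>
      rcases Bool.eq_false_or_eq_true (cc n i (β - 1)) with h3 | h3 <;>
      rcases Bool.eq_false_or_eq_true (cc n i β) with h4 | h4 <;>
      rcases Bool.eq_false_or_eq_true (cc n i (α + β)) with h5 | h5 <;>
      rcases Bool.eq_false_or_eq_true (cc n i (α + β + 1)) with h6 | h6 <;>
      simp [h1, h2, h3, h4, h5, h6] <;> decide
  · -- α ≥ 1, β ≥ 1, top: α + β = n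
    have hsym : cc n i α = cc n i β := by
      rw [cc_symm n i α hi2 (by omega), show n - α = β from by omega]
    simp only [and_iff_right (show 1 ≤ α ∧ 1 ≤ β + 1 ∧ α + (β + 1) ≤ n + 1 from by omega),
      and_iff_right (show 1 ≤ α + 1 ∧ 1 ≤ β ∧ α + 1 + β ≤ n + 1 from by omega),
      show ∀ P : Prop, ((1 ≤ α + 1 ∧ 1 ≤ β + 1 ∧ α + 1 + (β + 1) ≤ n + 1) ∧ P) ↔ False from
        fun P => iff_false_intro (fun hc => absurd hc.1 (by omega))]
    simp only [show α + β = n from by omega, cc_n n i hi1 hi2, hsym]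
    rcases Bool.eq_false_or_eq_true (cc n i (α - 1)) with h1 | h1 <;>
      rcases Bool.eq_false_or_eq_true (cc n i (β - 1)) with h2 | h2 <;>
      rcases Bool.eq_false_or_eq_true (cc n i β) with h3 | h3 <;>
      simp [h1, h2, h3] <;> decide

end TotEvenAux

/-- For each `1 ≤ i ≤ ⌊n/2⌋` there is a totally even subset of `Tₙ` containing the bottom
edge `{(i,1),(i+1,1)}` and no other bottom edge `{(i',1),(i'+1,1)}` with `1 ≤ i' ≤ ⌊n/2⌋`. -/
theorem exists_basis_totallyEven (n i : ℕ) (hi1 : 1 ≤ i) (hi2 : i ≤ n / 2) :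
    ∃ A : Set TEdge, TotallyEven n A ∧ s(((i : ℕ), 1), (i + 1, 1)) ∈ A ∧
      ∀ i' : ℕ, 1 ≤ i' → i' ≤ n / 2 → i' ≠ i →
        s(((i' : ℕ), 1), (i' + 1, 1)) ∉ A := by
  refine ⟨TotEvenAux.myA n i,
    ⟨fun e he => TotEvenAux.myA_isEdge n i e he,
     TotEvenAux.myA_vertex n i hi1 hi2,
     fun x y hf => TotEvenAux.myA_up n i x y hf,
     fun x y hf => TotEvenAux.myA_down n i x y hf⟩, ?_, ?_⟩
  · rw [TotEvenAux.memH]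
    refine ⟨by omega, ?_⟩
    simp only [show i + 1 - 1 = i from by omega]
    simp only [TotEvenAux.cc, ne_eq, decide_eq_decide]
    omega
  · intro i' h1 h2 h3 hmem
    rw [TotEvenAux.memH] at hmem
    obtain ⟨-, hc⟩ := hmem
    apply hc
    simp only [show i' + 1 - 1 = i' from by omega]
    simp only [TotEvenAux.cc, decide_eq_decide]
    omega
end
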